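/- For every d ≥ 2, there exists a triangle-free graph with maximum degree at most d, matching number exactly d, and exactly d² + 1 edges; namely the graph A_d obtained from a 5-cycle v₁v₂v₃v₄v₅ by replacing v₁ and v₂ each with an independent set of size d−1 and replacing edges incident to the replaced vertices by complete joins. -/

import Mathlib

/-- The matching number of a simple graph: the largest size of a matching. -/
noncomputable def matchingNumber {V : Type*} (G : SimpleGraph V) : ℕ :=
  sSup {n | ∃ M : G.Subgraph, M.IsMatching ∧ M.edgeSet.ncard = n}

/-- Vertex set of `A_d`: two independent sets `S₁`, `S₂` of size `d-1`
(replacing `v₁` and `v₂` of a 5-cycle) together with the vertices `v₃, v₄, v₅`. -/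
abbrev AVert (d : ℕ) : Type := Fin (d - 1) ⊕ (Fin (d - 1) ⊕ Fin 3)

/-- Base relation for `A_d`: all pairs between `S₁` and `S₂`, all pairs between
`S₂` and `v₃`, the edges `v₃v₄` and `v₄v₅`, and all pairs between `v₅` and `S₁`. -/
def ARel (d : ℕ) : AVert d → AVert d → Prop
  | Sum.inl _, Sum.inr (Sum.inl _) => True
  | Sum.inr (Sum.inl _), Sum.inr (Sum.inr ⟨0, _⟩) => True
  | Sum.inr (Sum.inr ⟨0, _⟩), Sum.inr (Sum.inr ⟨1, _⟩) => True
  | Sum.inr (Sum.inr ⟨1, _⟩), Sum.inr (Sum.inr ⟨2, _⟩) => True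
  | Sum.inr (Sum.inr ⟨2, _⟩), Sum.inl _ => True
  | _, _ => False

/-- The graph `A_d`, a blown-up 5-cycle. -/
def AGraph (d : ℕ) : SimpleGraph (AVert d) := SimpleGraph.fromRel (ARel d)

noncomputable instance (d : ℕ) : DecidableRel (AGraph d).Adj :=
  Classical.decRel _

set_option linter.unreachableTactic false
set_option linter.unusedTactic false
set_option linter.unnecessarySeqFocus false

def cls {d : ℕ} : AVert d → ZMod 5
  | Sum.inl _ => 0
  | Sum.inr (Sum.inl _) => 1
  | Sum.inr (Sum.inr k) => (k : ZMod 5) + 2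

lemma arel_cls {d : ℕ} {u v : AVert d} (h : ARel d u v) : cls v = cls u + 1 := by
  rcases u with i | (i | ⟨k, hk⟩) <;> rcases v with j | (j | ⟨m, hm⟩) <;>
    simp only [ARel] at h <;> first
      | rfl
      | (interval_cases k <;> interval_cases m <;> simp_all [ARel, cls]) <;> rfl
      | (interval_cases k <;> simp_all [ARel, cls]) <;> rfl
      | (interval_cases m <;> simp_all [ARel, cls]) <;> rfl
      | exact h.elim

lemma adj_cls {d : ℕ} {u v : AVert d} (h : (AGraph d).Adj u v) :
    cls v = cls u + 1 ∨ cls u = cls v + 1 := by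
  rcases h.2 with h' | h'
  · exact Or.inl (arel_cls h')
  · exact Or.inr (arel_cls h')

theorem tf (d : ℕ) : (AGraph d).CliqueFree 3 := by
  intro t ht
  obtain ⟨hclique, hcard⟩ := ht
  rw [Finset.card_eq_three] at hcard
  obtain ⟨a, b, c, hab, hac, hbc, rfl⟩ := hcard
  have h1 := adj_cls (hclique (by simp) (by simp) hab)
  have h2 := adj_cls (hclique (by simp) (by simp) hac)
  have h3 := adj_cls (hclique (by simp) (by simp) hbc)
  have key : ∀ x y z : ZMod 5,
      (y = x + 1 ∨ x = y + 1) → (z = x + 1 ∨ x = z + 1) → (z = y + 1 ∨ y = z + 1) → False := by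
    decide
  exact key _ _ _ h1 h2 h3

open Finset in
lemma nbhd_inl (d : ℕ) (i : Fin (d-1)) : (AGraph d).neighborFinset (Sum.inl i) =
    (Finset.univ.image fun j : Fin (d-1) => (Sum.inr (Sum.inl j) : AVert d)) ∪ {Sum.inr (Sum.inr 2)} := by
  classical
  ext w
  rw [SimpleGraph.mem_neighborFinset]
  rcases w with j | (j | k)
  · simp [AGraph, ARel] <;> exact trivial
  · simp [AGraph, ARel] <;> exact trivial
  · fin_cases k <;> simp [AGraph, ARel, Fin.ext_iff] <;> exact trivial

open Finset in
lemma nbhd_inr_inl (d : ℕ) (i : Fin (d-1)) : (AGraph d).neighborFinset (Sum.inr (Sum.inl i)) =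
    (Finset.univ.image fun j : Fin (d-1) => (Sum.inl j : AVert d)) ∪ {Sum.inr (Sum.inr 0)} := by
  classical
  ext w
  rw [SimpleGraph.mem_neighborFinset]
  rcases w with j | (j | k)
  · simp [AGraph, ARel] <;> exact trivial
  · simp [AGraph, ARel] <;> exact trivial
  · fin_cases k <;> simp [AGraph, ARel, Fin.ext_iff] <;> exact trivial

open Finset in
lemma nbhd_v3 (d : ℕ) : (AGraph d).neighborFinset (Sum.inr (Sum.inr 0)) =
    (Finset.univ.image fun j : Fin (d-1) => (Sum.inr (Sum.inl j) : AVert d)) ∪ {Sum.inr (Sum.inr 1)} := by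
  classical
  ext w
  rw [SimpleGraph.mem_neighborFinset]
  rcases w with j | (j | k)
  · simp [AGraph, ARel] <;> exact trivial
  · simp [AGraph, ARel] <;> exact trivial
  · fin_cases k <;> simp [AGraph, ARel, Fin.ext_iff] <;> exact trivial

open Finset in
lemma nbhd_v4 (d : ℕ) : (AGraph d).neighborFinset (Sum.inr (Sum.inr 1)) =
    {Sum.inr (Sum.inr 0), Sum.inr (Sum.inr 2)} := by
  classical
  ext w
  rw [SimpleGraph.mem_neighborFinset]
  rcases w with j | (j | k)
  · simp [AGraph, ARel] <;> exact trivial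
  · simp [AGraph, ARel] <;> exact trivial
  · fin_cases k <;> simp [AGraph, ARel, Fin.ext_iff] <;> exact trivial

open Finset in
lemma nbhd_v5 (d : ℕ) : (AGraph d).neighborFinset (Sum.inr (Sum.inr 2)) =
    (Finset.univ.image fun j : Fin (d-1) => (Sum.inl j : AVert d)) ∪ {Sum.inr (Sum.inr 1)} := by
  classical
  ext w
  rw [SimpleGraph.mem_neighborFinset]
  rcases w with j | (j | k)
  · simp [AGraph, ARel] <;> exact trivial
  · simp [AGraph, ARel] <;> exact trivial
  · fin_cases k <;> simp [AGraph, ARel, Fin.ext_iff] <;> exact trivial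

lemma card_aux (d : ℕ) (hd : 1 ≤ d) {f : Fin (d-1) → AVert d} (hf : Function.Injective f)
    (x : AVert d) (hx : ∀ j, f j ≠ x) :
    ((Finset.univ.image f) ∪ {x}).card = d := by
  classical
  rw [Finset.union_comm, ← Finset.insert_eq, Finset.card_insert_of_notMem (by simp [hx]),
    Finset.card_image_of_injective _ hf, Finset.card_univ, Fintype.card_fin]
  omega

lemma deg_inl (d : ℕ) (hd : 1 ≤ d) (i : Fin (d-1)) : (AGraph d).degree (Sum.inl i) = d := by
  rw [SimpleGraph.degree, nbhd_inl]
  exact card_aux d hd (fun a b h => by simpa using h) _ (fun j => by simp)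

lemma deg_inr_inl (d : ℕ) (hd : 1 ≤ d) (i : Fin (d-1)) :
    (AGraph d).degree (Sum.inr (Sum.inl i)) = d := by
  rw [SimpleGraph.degree, nbhd_inr_inl]
  exact card_aux d hd (fun a b h => by simpa using h) _ (fun j => by simp)

lemma deg_v3 (d : ℕ) (hd : 1 ≤ d) : (AGraph d).degree (Sum.inr (Sum.inr 0)) = d := by
  rw [SimpleGraph.degree, nbhd_v3]
  exact card_aux d hd (fun a b h => by simpa using h) _ (fun j => by simp)

lemma deg_v4 (d : ℕ) : (AGraph d).degree (Sum.inr (Sum.inr 1)) = 2 := by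
  classical
  rw [SimpleGraph.degree, nbhd_v4,
    Finset.card_insert_of_notMem (by simp [Fin.ext_iff]), Finset.card_singleton]

lemma deg_v5 (d : ℕ) (hd : 1 ≤ d) : (AGraph d).degree (Sum.inr (Sum.inr 2)) = d := by
  rw [SimpleGraph.degree, nbhd_v5]
  exact card_aux d hd (fun a b h => by simpa using h) _ (fun j => by simp)

lemma two_mul_matching {V : Type*} [Fintype V] {G : SimpleGraph V} {M : G.Subgraph}
    (h : M.IsMatching) : M.verts.ncard = 2 * M.edgeSet.ncard := by
  classical
  have e1 : M.edgeSet.ncard = M.coe.edgeFinset.card := by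
    rw [← M.image_coe_edgeSet_coe,
      Set.ncard_image_of_injective _ (Sym2.map.injective Subtype.val_injective),
      Set.ncard_eq_toFinset_card', SimpleGraph.edgeFinset]
  have h1 : ∀ (v : M.verts) (inst : Fintype (M.coe.neighborSet v)),
      @SimpleGraph.degree _ M.coe v inst = 1 := by
    intro v inst
    rw [SimpleGraph.degree, Finset.card_eq_one]
    obtain ⟨w, hw, hu⟩ := h v.2
    refine ⟨⟨w, M.edge_vert (M.adj_symm hw)⟩, ?_⟩
    ext u
    simp only [SimpleGraph.mem_neighborFinset, Finset.mem_singleton]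
    constructor
    · exact fun hadj => Subtype.ext (hu u hadj)
    · rintro rfl; exact hw
  rw [e1, ← SimpleGraph.sum_degrees_eq_twice_card_edges]
  simp only [h1]
  rw [Finset.sum_const, Finset.card_univ, smul_eq_mul,
    mul_one, ← Nat.card_coe_set_eq, Nat.card_eq_fintype_card]

def MSub (d : ℕ) : (AGraph d).Subgraph where
  verts := {v | v ≠ Sum.inr (Sum.inr 2)}
  Adj u v :=
    (∃ i, u = Sum.inl i ∧ v = Sum.inr (Sum.inl i)) ∨
    (∃ i, v = Sum.inl i ∧ u = Sum.inr (Sum.inl i)) ∨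
    (u = Sum.inr (Sum.inr 0) ∧ v = Sum.inr (Sum.inr 1)) ∨
    (u = Sum.inr (Sum.inr 1) ∧ v = Sum.inr (Sum.inr 0))
  adj_sub := by
    rintro u v (⟨i, rfl, rfl⟩ | ⟨i, rfl, rfl⟩ | ⟨rfl, rfl⟩ | ⟨rfl, rfl⟩) <;>
      refine ⟨by simp [Fin.ext_iff], ?_⟩
    · exact Or.inl trivial
    · exact Or.inr trivial
    · exact Or.inl trivial
    · exact Or.inr trivial
  edge_vert := by
    rintro u v (⟨i, rfl, rfl⟩ | ⟨i, rfl, rfl⟩ | ⟨rfl, rfl⟩ | ⟨rfl, rfl⟩) <;> simp [Fin.ext_iff]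
  symm := by
    constructor
    rintro u v (⟨i, rfl, rfl⟩ | ⟨i, rfl, rfl⟩ | ⟨rfl, rfl⟩ | ⟨rfl, rfl⟩)
    · exact Or.inr (Or.inl ⟨i, rfl, rfl⟩)
    · exact Or.inl ⟨i, rfl, rfl⟩
    · exact Or.inr (Or.inr (Or.inr ⟨rfl, rfl⟩))
    · exact Or.inr (Or.inr (Or.inl ⟨rfl, rfl⟩))

lemma msub_isMatching (d : ℕ) : (MSub d).IsMatching := by
  rintro (i | (i | ⟨k, hk⟩)) hv
  · refine ⟨Sum.inr (Sum.inl i), Or.inl ⟨i, rfl, rfl⟩, ?_⟩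
    rintro w (⟨j, hj, rfl⟩ | ⟨j, hj, h2⟩ | ⟨h1, _⟩ | ⟨h1, _⟩) <;> simp_all [MSub]
  · refine ⟨Sum.inl i, Or.inr (Or.inl ⟨i, rfl, rfl⟩), ?_⟩
    rintro w (⟨j, hj, h2⟩ | ⟨j, rfl, h2⟩ | ⟨h1, _⟩ | ⟨h1, _⟩) <;> simp_all [MSub, Fin.ext_iff]
  · interval_cases k
    · refine ⟨Sum.inr (Sum.inr 1), Or.inr (Or.inr (Or.inl ⟨rfl, rfl⟩)), ?_⟩
      rintro w (⟨j, hj, h2⟩ | ⟨j, hj, h2⟩ | ⟨h1, rfl⟩ | ⟨h1, h2⟩) <;> simp_all [MSub, Fin.ext_iff]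
    · refine ⟨Sum.inr (Sum.inr 0), Or.inr (Or.inr (Or.inr ⟨rfl, rfl⟩)), ?_⟩
      rintro w (⟨j, hj, h2⟩ | ⟨j, hj, h2⟩ | ⟨h1, h2⟩ | ⟨h1, rfl⟩) <;> simp_all [MSub, Fin.ext_iff]
    · exact absurd rfl hv

lemma card_avert (d : ℕ) (hd : 2 ≤ d) : Nat.card (AVert d) = 2 * d + 1 := by
  simp only [Nat.card_eq_fintype_card, Fintype.card_sum, Fintype.card_fin]
  omega

lemma msub_edges (d : ℕ) (hd : 2 ≤ d) : (MSub d).edgeSet.ncard = d := by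
  have h2 := two_mul_matching (msub_isMatching d)
  have hv : (MSub d).verts.ncard = 2 * d := by
    have hc : (MSub d).verts = ({Sum.inr (Sum.inr 2)}ᶜ : Set (AVert d)) := by
      ext w; simp [MSub]
    rw [hc]
    have := Set.ncard_add_ncard_compl ({Sum.inr (Sum.inr 2)} : Set (AVert d))
    rw [Set.ncard_singleton, card_avert d hd] at this
    omega
  omega


theorem stmt16 (d : ℕ) (hd : 2 ≤ d) :
    (AGraph d).CliqueFree 3 ∧
      (∀ v : AVert d, (AGraph d).degree v ≤ d) ∧
      matchingNumber (AGraph d) = d ∧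
      (AGraph d).edgeFinset.card = d ^ 2 + 1 := by
  have hd1 : 1 ≤ d := by omega
  refine ⟨tf d, ?_, ?_, ?_⟩
  · rintro (i | (i | ⟨k, hk⟩))
    · rw [deg_inl d hd1]
    · rw [deg_inr_inl d hd1]
    · interval_cases k
      · show (AGraph d).degree (Sum.inr (Sum.inr 0)) ≤ d
        rw [deg_v3 d hd1]
      · show (AGraph d).degree (Sum.inr (Sum.inr 1)) ≤ d
        rw [deg_v4]; omega
      · show (AGraph d).degree (Sum.inr (Sum.inr 2)) ≤ d
        rw [deg_v5 d hd1]
  · have ub : ∀ n ∈ {n | ∃ M : (AGraph d).Subgraph, M.IsMatching ∧ M.edgeSet.ncard = n},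
        n ≤ d := by
      rintro n ⟨M, hM, rfl⟩
      have h2 := two_mul_matching hM
      have h3 : M.verts.ncard ≤ 2 * d + 1 := by
        rw [← card_avert d hd, ← Set.ncard_univ]
        exact Set.ncard_le_ncard (Set.subset_univ _) (Set.finite_univ)
      omega
    have mem : d ∈ {n | ∃ M : (AGraph d).Subgraph, M.IsMatching ∧ M.edgeSet.ncard = n} :=
      ⟨MSub d, msub_isMatching d, msub_edges d hd⟩
    exact le_antisymm (csSup_le' ub) (le_csSup ⟨d, ub⟩ mem)
  · have hsum := SimpleGraph.sum_degrees_eq_twice_card_edges (AGraph d)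
    rw [Fintype.sum_sum_type, Fintype.sum_sum_type, Fin.sum_univ_three] at hsum
    simp only [deg_inl d hd1, deg_inr_inl d hd1, deg_v3 d hd1, deg_v4, deg_v5 d hd1,
      Finset.sum_const, Finset.card_univ, Fintype.card_fin, smul_eq_mul] at hsum
    have hq : (d - 1) * d + ((d - 1) * d + (d + (2 + d))) = 2 * (d ^ 2 + 1) := by
      obtain ⟨e, rfl⟩ : ∃ e, d = e + 1 := ⟨d - 1, by omega⟩
      simp only [Nat.add_sub_cancel]
      ring
    omega
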